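/- Fix 1 ≤ p ≤ ∞. Let F : ℝ × ℝ³ → ℂ be measurable and define (ZF)(t,x) := ∫_{−∞}^{t} ∫_{ℝ³} 𝟙_{\{|x−y| ≥ t−s\}} F(s,y)/(4π|x−y|) dy ds, which is the Duhamel term ∫_{s<t} cos((t−s)√(−Δ)) (−Δ)^{−1} F(s) ds for the free wave equation. Then for every x ∈ ℝ³, ‖(ZF)(·,x)‖_{L^p_t(ℝ)} ≤ (1/4π) ∫_{ℝ³} ‖F(·,y)‖_{L^p_t(ℝ)} dy; that is, ‖ZF‖_{L^∞_x L^p_t} ≤ (1/4π) ‖F‖_{L¹_x L^p_t}. -/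

import Mathlib

set_option autoImplicit false
set_option maxHeartbeats 1000000

open MeasureTheory ENNReal Real

noncomputable section

/-- `ℝ³` as a Euclidean space. -/
abbrev R3 : Type := EuclideanSpace ℝ (Fin 3)

/-- The Duhamel term `∫_{s<t} cos((t−s)√(−Δ)) (−Δ)^{−1} F(s) ds` for the free wave
equation: `(ZF)(t,x) = ∫_{s<t} ∫_{ℝ³} 𝟙_{|x−y| ≥ t−s} F(s,y)/(4π|x−y|) dy ds`. -/
def cosDuhamel (F : ℝ → R3 → ℂ) (t : ℝ) (x : R3) : ℂ :=
  ∫ s in Set.Iio t, ∫ y : R3,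
    if t - s ≤ ‖x - y‖ then (4 * π * ‖x - y‖)⁻¹ • F s y else 0

/-! ### Auxiliary lemmas -/

lemma iSup_min_natCast' (x : ℝ≥0∞) : ⨆ n : ℕ, min x (n : ℝ≥0∞) = x := by
  refine le_antisymm (iSup_le fun n => min_le_left _ _) ?_
  rcases eq_or_ne x ⊤ with hx | hx
  · subst hx
    calc (⊤ : ℝ≥0∞) = ⨆ n : ℕ, (n : ℝ≥0∞) := ENNReal.iSup_natCast.symm
    _ ≤ ⨆ n : ℕ, min ⊤ (n : ℝ≥0∞) := iSup_mono fun n => le_min le_top le_rfl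
  · obtain ⟨n, hn⟩ := ENNReal.exists_nat_gt hx
    exact le_iSup_of_le n (le_min le_rfl hn.le)

/-- **Minkowski's integral inequality** for `ℝ≥0∞`-valued functions. -/
lemma minkowski_lintegral {α β : Type*} [MeasurableSpace α] [MeasurableSpace β]
    (μ : Measure α) (ν : Measure β) [SigmaFinite μ] [SFinite ν]
    {p : ℝ} (hp : 1 ≤ p) {f : β → α → ℝ≥0∞} (hf : Measurable (Function.uncurry f)) :
    (∫⁻ a, (∫⁻ b, f b a ∂ν) ^ p ∂μ) ^ (1/p) ≤ ∫⁻ b, (∫⁻ a, f b a ^ p ∂μ) ^ (1/p) ∂ν := by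
  have hp0 : (0:ℝ) < p := lt_of_lt_of_le one_pos hp
  have hswap : Measurable (Function.uncurry fun a b => f b a) := by
    have : (Function.uncurry fun a b => f b a) = Function.uncurry f ∘ Prod.swap := rfl
    rw [this]; exact hf.comp measurable_swap
  have hfb : ∀ b, Measurable (fun a => f b a) := fun b =>
    hf.comp (measurable_const.prodMk measurable_id)
  have hfa : ∀ a, Measurable (fun b => f b a) := fun a =>
    hf.comp (measurable_id.prodMk measurable_const)
  set φ : α → ℝ≥0∞ := fun a => ∫⁻ b, f b a ∂ν with hφdef
  have hφ : Measurable φ := Measurable.lintegral_prod_right hswap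
  set J : ℝ≥0∞ := ∫⁻ b, (∫⁻ a, f b a ^ p ∂μ) ^ (1/p) ∂ν with hJdef
  rcases eq_or_lt_of_le hp with hp1 | hp1
  · -- p = 1
    rw [hJdef, ← hp1]
    simp only [one_div_one, ENNReal.rpow_one]
    exact le_of_eq (lintegral_lintegral_swap hswap.aemeasurable)
  -- 1 < p
  have hpq := Real.HolderConjugate.conjExponent hp1
  set q : ℝ := p.conjExponent with hqdef
  have hq0 : (0:ℝ) < q := hpq.symm.pos
  set φn : ℕ → α → ℝ≥0∞ := fun n a =>
    (spanningSets μ n).indicator (fun a => min (φ a) n) a with hφndef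
  have hφn_meas : ∀ n, Measurable (φn n) := fun n =>
    (hφ.min measurable_const).indicator (measurableSet_spanningSets μ n)
  have hφn_mono : Monotone φn := by
    intro m n hmn a
    by_cases hin : a ∈ spanningSets μ m
    · rw [hφndef]
      simp only []
      rw [Set.indicator_of_mem hin, Set.indicator_of_mem (monotone_spanningSets μ hmn hin)]
      exact min_le_min le_rfl (Nat.cast_le.2 hmn)
    · rw [hφndef]; simp only []
      rw [Set.indicator_of_notMem hin]; exact zero_le
  have hφn_le : ∀ n a, φn n a ≤ φ a := by
    intro n a
    by_cases hin : a ∈ spanningSets μ n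
    · rw [hφndef]; simp only []
      rw [Set.indicator_of_mem hin]; exact min_le_left _ _
    · rw [hφndef]; simp only []
      rw [Set.indicator_of_notMem hin]; exact zero_le
  have hφn_sup : ∀ a, ⨆ n, φn n a = φ a := by
    intro a
    refine le_antisymm (iSup_le fun n => hφn_le n a) ?_
    have ha : a ∈ ⋃ n, spanningSets μ n := by
      rw [iUnion_spanningSets]; trivial
    obtain ⟨m, hm⟩ := Set.mem_iUnion.1 ha
    conv_lhs => rw [← iSup_min_natCast' (φ a)]
    refine iSup_le fun k => le_iSup_of_le (max m k) ?_
    rw [hφndef]; simp only []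
    rw [Set.indicator_of_mem (monotone_spanningSets μ (le_max_left m k) hm)]
    exact min_le_min le_rfl (Nat.cast_le.2 (le_max_right m k))
  set S : ℕ → ℝ≥0∞ := fun n => ∫⁻ a, φn n a ^ p ∂μ with hSdef
  have hS_ne_top : ∀ n, S n ≠ ⊤ := by
    intro n
    have hb : ∀ a, φn n a ^ p ≤ (spanningSets μ n).indicator (fun _ => (n:ℝ≥0∞) ^ p) a := by
      intro a
      by_cases hin : a ∈ spanningSets μ n
      · rw [hφndef]; simp only []
        rw [Set.indicator_of_mem hin, Set.indicator_of_mem hin]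
        exact ENNReal.rpow_le_rpow (min_le_right _ _) hp0.le
      · rw [hφndef]; simp only []
        rw [Set.indicator_of_notMem hin, Set.indicator_of_notMem hin,
          ENNReal.zero_rpow_of_pos hp0]
    refine ne_top_of_le_ne_top ?_ (lintegral_mono hb)
    rw [lintegral_indicator_const (measurableSet_spanningSets μ n)]
    exact ENNReal.mul_ne_top (ENNReal.rpow_ne_top_of_nonneg hp0.le (ENNReal.natCast_ne_top n))
      (measure_spanningSets_lt_top μ n).ne
  have hkey : ∀ n, S n ≤ J * S n ^ (1/q) := by
    intro n
    have h1 : S n ≤ ∫⁻ a, φn n a ^ (p-1) * φ a ∂μ := by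
      refine lintegral_mono fun a => ?_
      calc φn n a ^ p = φn n a ^ ((p-1)+1) := by norm_num
      _ = φn n a ^ (p-1) * φn n a := by
            rw [ENNReal.rpow_add_of_nonneg (p-1) 1 (by linarith) zero_le_one,
              ENNReal.rpow_one]
      _ ≤ φn n a ^ (p-1) * φ a := mul_le_mul_right (hφn_le n a) _
    have h2 : ∫⁻ a, φn n a ^ (p-1) * φ a ∂μ
        = ∫⁻ b, ∫⁻ a, φn n a ^ (p-1) * f b a ∂μ ∂ν := by
      have hstep : ∀ a, φn n a ^ (p-1) * φ a = ∫⁻ b, φn n a ^ (p-1) * f b a ∂ν := by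
        intro a
        rw [hφdef]
        exact (lintegral_const_mul _ (hfa a)).symm
      rw [lintegral_congr hstep]
      refine lintegral_lintegral_swap ?_
      have : Measurable fun w : α × β => φn n w.1 ^ (p - 1) * f w.2 w.1 :=
        (ENNReal.continuous_rpow_const.measurable.comp ((hφn_meas n).comp measurable_fst)).mul
          (hf.comp (measurable_snd.prodMk measurable_fst))
      exact this.aemeasurable
    have h3 : ∀ b, ∫⁻ a, φn n a ^ (p-1) * f b a ∂μ
        ≤ (∫⁻ a, f b a ^ p ∂μ) ^ (1/p) * S n ^ (1/q) := by
      intro b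
      have hcomm : ∫⁻ a, φn n a ^ (p-1) * f b a ∂μ
          = ∫⁻ a, ((fun a => f b a) * fun a => φn n a ^ (p-1)) a ∂μ := by
        refine lintegral_congr fun a => ?_
        simp [mul_comm]
      rw [hcomm]
      have hH := ENNReal.lintegral_mul_le_Lp_mul_Lq (f := fun a => f b a)
        (g := fun a => φn n a ^ (p-1)) μ hpq (hfb b).aemeasurable
        (Measurable.aemeasurable
          (ENNReal.continuous_rpow_const.measurable.comp (hφn_meas n)))
      refine le_trans hH ?_
      have : ∫⁻ a, (φn n a ^ (p-1)) ^ q ∂μ = S n := by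
        rw [hSdef]
        refine lintegral_congr fun a => ?_
        rw [← ENNReal.rpow_mul, hpq.sub_one_mul_conj]
      rw [this]
    have h4 : ∫⁻ b, (∫⁻ a, f b a ^ p ∂μ) ^ (1/p) * S n ^ (1/q) ∂ν = J * S n ^ (1/q) := by
      rw [hJdef]
      exact lintegral_mul_const' _ _ (ENNReal.rpow_ne_top_of_nonneg (by positivity) (hS_ne_top n))
    calc S n ≤ ∫⁻ a, φn n a ^ (p-1) * φ a ∂μ := h1
    _ = ∫⁻ b, ∫⁻ a, φn n a ^ (p-1) * f b a ∂μ ∂ν := h2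
    _ ≤ ∫⁻ b, (∫⁻ a, f b a ^ p ∂μ) ^ (1/p) * S n ^ (1/q) ∂ν := lintegral_mono h3
    _ = J * S n ^ (1/q) := h4
  have hSn_le : ∀ n, S n ^ (1/p) ≤ J := by
    intro n
    by_cases hS0 : S n = 0
    · rw [hS0, ENNReal.zero_rpow_of_pos (by positivity)]; exact zero_le
    have hc0 : S n ^ (1/q) ≠ 0 := by
      rw [Ne, ENNReal.rpow_eq_zero_iff]
      push_neg
      exact ⟨fun h => absurd h hS0, fun h => absurd h (hS_ne_top n)⟩
    have hcT : S n ^ (1/q) ≠ ⊤ := ENNReal.rpow_ne_top_of_nonneg (by positivity) (hS_ne_top n)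
    have hmul : S n ^ (1/p) * S n ^ (1/q) ≤ J * S n ^ (1/q) := by
      rw [← ENNReal.rpow_add_of_nonneg (1/p) (1/q) (by positivity) (by positivity)]
      have : 1/p + 1/q = 1 := by
        rw [one_div, one_div]; simpa using hpq.inv_add_inv_eq_inv
      rw [this, ENNReal.rpow_one]
      exact hkey n
    exact (ENNReal.mul_le_mul_iff_left hc0 hcT).1 hmul
  have hMCT : ∫⁻ a, φ a ^ p ∂μ = ⨆ n, S n := by
    have hl := lintegral_iSup (μ := μ) (f := fun n a => φn n a ^ p)
      (fun n => ENNReal.continuous_rpow_const.measurable.comp (hφn_meas n))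
      (fun m n hmn a => ENNReal.rpow_le_rpow (hφn_mono hmn a) hp0.le)
    have hpt : ∀ a, φ a ^ p = ⨆ n, φn n a ^ p := by
      intro a
      have heq : (ENNReal.orderIsoRpow p hp0) (⨆ n, φn n a)
          = ⨆ n, (ENNReal.orderIsoRpow p hp0) (φn n a) :=
        (ENNReal.orderIsoRpow p hp0).map_iSup _
      rw [hφn_sup a] at heq
      exact heq
    calc ∫⁻ a, φ a ^ p ∂μ = ∫⁻ a, ⨆ n, φn n a ^ p ∂μ := lintegral_congr hpt
    _ = ⨆ n, S n := hl
  have hfinal : ∫⁻ a, φ a ^ p ∂μ ≤ J ^ p := by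
    rw [hMCT]
    refine iSup_le fun n => ?_
    have : S n = (S n ^ (1/p)) ^ p := by
      rw [← ENNReal.rpow_mul, one_div, inv_mul_cancel₀ hp0.ne', ENNReal.rpow_one]
    rw [this]
    exact ENNReal.rpow_le_rpow (hSn_le n) hp0.le
  calc (∫⁻ a, φ a ^ p ∂μ) ^ (1/p) ≤ (J ^ p) ^ (1/p) :=
        ENNReal.rpow_le_rpow hfinal (by positivity)
  _ = J := by rw [← ENNReal.rpow_mul, mul_one_div, div_self hp0.ne', ENNReal.rpow_one]

lemma measurePreserving_sub_left' (t : ℝ) :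
    MeasurePreserving (fun u : ℝ => t - u) volume volume := by
  have h := (measurePreserving_add_left (volume : Measure ℝ) t).comp
    (Measure.measurePreserving_neg (volume : Measure ℝ))
  simpa [Function.comp_def, sub_eq_add_neg] using h

lemma setLIntegral_Ico_sub (h : ℝ → ℝ≥0∞) (t r : ℝ) :
    ∫⁻ u in Set.Ioc 0 r, h (t - u) = ∫⁻ s in Set.Ico (t - r) t, h s := by
  have hemb : MeasurableEmbedding (fun u : ℝ => t - u) :=
    (Homeomorph.subLeft t).measurableEmbedding
  have hpre : (fun u : ℝ => t - u) ⁻¹' Set.Ico (t - r) t = Set.Ioc 0 r := by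
    ext u
    simp only [Set.mem_preimage, Set.mem_Ico, Set.mem_Ioc]
    constructor <;> rintro ⟨h1, h2⟩ <;> constructor <;> linarith
  have := (measurePreserving_sub_left' t).setLIntegral_comp_preimage_emb hemb h
    (Set.Ico (t - r) t)
  rwa [hpre] at this

lemma lintegral_sub_eq' (h : ℝ → ℝ≥0∞) (u : ℝ) :
    ∫⁻ t, h (t - u) = ∫⁻ t, h t := by
  simpa [sub_eq_add_neg] using lintegral_add_right_eq_self h (-u)

/-- Pointwise bound on the Duhamel term. -/
lemma duhamel_pointwise (F : ℝ → R3 → ℂ) (hF : Measurable (Function.uncurry F))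
    (x : R3) (t : ℝ) :
    (‖cosDuhamel F t x‖₊ : ℝ≥0∞) ≤
      ∫⁻ y : R3, ENNReal.ofReal ((4 * π * ‖x - y‖)⁻¹) *
        ∫⁻ s in Set.Ico (t - ‖x - y‖) t, (‖F s y‖₊ : ℝ≥0∞) ∂volume ∂volume := by
  have hr : Measurable fun y : R3 => ‖x - y‖ :=
    (continuous_const.sub continuous_id).norm.measurable
  have hk : Measurable (Function.uncurry fun (s : ℝ) (y : R3) =>
      (if t - s ≤ ‖x - y‖ then ENNReal.ofReal ((4 * π * ‖x - y‖)⁻¹) else 0) *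
        (‖F s y‖₊ : ℝ≥0∞)) := by
    show Measurable fun w : ℝ × R3 =>
      (if t - w.1 ≤ ‖x - w.2‖ then ENNReal.ofReal ((4 * π * ‖x - w.2‖)⁻¹) else 0) *
        (‖F w.1 w.2‖₊ : ℝ≥0∞)
    apply Measurable.mul
    · refine Measurable.ite ?_ ?_ measurable_const
      · exact measurableSet_le (measurable_const.sub measurable_fst) (hr.comp measurable_snd)
      · exact ENNReal.measurable_ofReal.comp (((hr.comp measurable_snd).const_mul _).inv)
    · exact hF.enorm
  have h0 : (‖cosDuhamel F t x‖₊ : ℝ≥0∞) ≤ ∫⁻ s in Set.Iio t, ∫⁻ y : R3,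
      (if t - s ≤ ‖x - y‖ then ENNReal.ofReal ((4 * π * ‖x - y‖)⁻¹) else 0) *
        (‖F s y‖₊ : ℝ≥0∞) ∂volume ∂volume := by
    refine le_trans (enorm_integral_le_lintegral_enorm _) (lintegral_mono fun s => ?_)
    refine le_trans (enorm_integral_le_lintegral_enorm _) (lintegral_mono fun y => ?_)
    by_cases h : t - s ≤ ‖x - y‖
    · rw [if_pos h, if_pos h, enorm_smul]
      exact mul_le_mul_left (le_of_eq (Real.enorm_eq_ofReal (by positivity))) _
    · rw [if_neg h, if_neg h]; simp
  refine h0.trans (le_of_eq ?_)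
  calc ∫⁻ s in Set.Iio t, ∫⁻ y : R3,
      (if t - s ≤ ‖x - y‖ then ENNReal.ofReal ((4 * π * ‖x - y‖)⁻¹) else 0) *
        (‖F s y‖₊ : ℝ≥0∞) ∂volume ∂volume
      = ∫⁻ y : R3, ∫⁻ s in Set.Iio t,
      (if t - s ≤ ‖x - y‖ then ENNReal.ofReal ((4 * π * ‖x - y‖)⁻¹) else 0) *
        (‖F s y‖₊ : ℝ≥0∞) ∂volume ∂volume := lintegral_lintegral_swap hk.aemeasurable
  _ = ∫⁻ y : R3, ENNReal.ofReal ((4 * π * ‖x - y‖)⁻¹) *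
        ∫⁻ s in Set.Ico (t - ‖x - y‖) t, (‖F s y‖₊ : ℝ≥0∞) ∂volume ∂volume := by
      refine lintegral_congr fun y => ?_
      have h1 : (fun s => (if t - s ≤ ‖x - y‖ then ENNReal.ofReal ((4 * π * ‖x - y‖)⁻¹) else 0)
            * (‖F s y‖₊ : ℝ≥0∞))
          = (Set.Ici (t - ‖x - y‖)).indicator
            (fun s => ENNReal.ofReal ((4 * π * ‖x - y‖)⁻¹) * (‖F s y‖₊ : ℝ≥0∞)) := by
        funext s
        by_cases h : t - s ≤ ‖x - y‖
        · rw [if_pos h, Set.indicator_of_mem (by simpa [Set.mem_Ici] using sub_le_comm.mp h)]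
        · rw [if_neg h, Set.indicator_of_notMem, zero_mul]
          simp only [Set.mem_Ici, not_le]
          push_neg at h
          linarith
      rw [h1, lintegral_indicator measurableSet_Ici,
        Measure.restrict_restrict measurableSet_Ici, Set.Ici_inter_Iio,
        lintegral_const_mul' _ _ ENNReal.ofReal_ne_top]

/-- The kernel for the finite-exponent case. -/
def cdK (F : ℝ → R3 → ℂ) (x : R3) (z : R3 × ℝ) (t : ℝ) : ℝ≥0∞ :=
  (if z.2 ∈ Set.Ioc 0 ‖x - z.1‖ then ENNReal.ofReal ((4 * π * ‖x - z.1‖)⁻¹) else 0) *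
    (‖F (t - z.2) z.1‖₊ : ℝ≥0∞)

theorem cos_duhamel_reversed_estimate (p : ℝ≥0∞) (hp : 1 ≤ p)
    (F : ℝ → R3 → ℂ) (hF : Measurable (Function.uncurry F)) :
    (∀ x : R3,
      eLpNorm (fun t => cosDuhamel F t x) p volume ≤
        (ENNReal.ofReal (4 * π))⁻¹ * ∫⁻ y : R3, eLpNorm (fun t => F t y) p volume) ∧
    essSup (fun x : R3 => eLpNorm (fun t => cosDuhamel F t x) p volume) volume ≤
      (ENNReal.ofReal (4 * π))⁻¹ * ∫⁻ y : R3, eLpNorm (fun t => F t y) p volume := by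
  have hπ : (0:ℝ) < 4 * π := by positivity
  have hp0 : p ≠ 0 := (lt_of_lt_of_le zero_lt_one hp).ne'
  suffices hmain : ∀ x : R3, eLpNorm (fun t => cosDuhamel F t x) p volume ≤
      (ENNReal.ofReal (4 * π))⁻¹ * ∫⁻ y : R3, eLpNorm (fun t => F t y) p volume by
    exact ⟨hmain, essSup_le_of_ae_le _ (Filter.Eventually.of_forall hmain)⟩
  intro x
  have hr : Measurable fun y : R3 => ‖x - y‖ :=
    (continuous_const.sub continuous_id).norm.measurable
  have hC : Measurable fun y : R3 => ENNReal.ofReal ((4 * π * ‖x - y‖)⁻¹) :=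
    ENNReal.measurable_ofReal.comp ((hr.const_mul _).inv)
  have hCr : ∀ y : R3, ENNReal.ofReal ((4 * π * ‖x - y‖)⁻¹) * ENNReal.ofReal ‖x - y‖
      ≤ (ENNReal.ofReal (4 * π))⁻¹ := by
    intro y
    rcases eq_or_lt_of_le (norm_nonneg (x - y)) with h0 | h0
    · rw [← h0]; simp
    · rw [← ENNReal.ofReal_mul (by positivity),
        show (4 * π * ‖x - y‖)⁻¹ * ‖x - y‖ = (4 * π)⁻¹ by field_simp,
        ENNReal.ofReal_inv_of_pos hπ]
  have hCtop : (ENNReal.ofReal (4 * π))⁻¹ ≠ ⊤ :=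
    ENNReal.inv_ne_top.2 (ENNReal.ofReal_pos.2 hπ).ne'
  have hA := duhamel_pointwise F hF x
  by_cases hptop : p = ∞
  · -- p = ∞
    subst hptop
    rw [eLpNorm_exponent_top]
    have hbd : ∀ t, (‖cosDuhamel F t x‖₊ : ℝ≥0∞) ≤
        (ENNReal.ofReal (4 * π))⁻¹ * ∫⁻ y : R3, eLpNorm (fun t => F t y) ⊤ volume := by
      intro t
      refine (hA t).trans ?_
      have hineq : ∀ y : R3,
          ENNReal.ofReal ((4 * π * ‖x - y‖)⁻¹) *
            ∫⁻ s in Set.Ico (t - ‖x - y‖) t, (‖F s y‖₊ : ℝ≥0∞) ∂volume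
          ≤ (ENNReal.ofReal (4 * π))⁻¹ * eLpNorm (fun t => F t y) ⊤ volume := by
        intro y
        have h1 : ∫⁻ s in Set.Ico (t - ‖x - y‖) t, (‖F s y‖₊ : ℝ≥0∞) ∂volume
            ≤ ENNReal.ofReal ‖x - y‖ * eLpNorm (fun t => F t y) ⊤ volume := by
          rw [eLpNorm_exponent_top]
          have hae : ∀ᵐ s ∂(volume : Measure ℝ),
              (‖F s y‖₊ : ℝ≥0∞) ≤ eLpNormEssSup (fun t => F t y) volume :=
            ENNReal.ae_le_essSup fun s => (‖F s y‖₊ : ℝ≥0∞)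
          calc ∫⁻ s in Set.Ico (t - ‖x - y‖) t, (‖F s y‖₊ : ℝ≥0∞) ∂volume
              ≤ ∫⁻ _ in Set.Ico (t - ‖x - y‖) t,
                eLpNormEssSup (fun t => F t y) volume ∂volume :=
            lintegral_mono_ae (ae_restrict_of_ae hae)
          _ = eLpNormEssSup (fun t => F t y) volume * volume (Set.Ico (t - ‖x - y‖) t) :=
            setLIntegral_const _ _
          _ = ENNReal.ofReal ‖x - y‖ * eLpNormEssSup (fun t => F t y) volume := by
            rw [Real.volume_Ico, show t - (t - ‖x - y‖) = ‖x - y‖ by ring, mul_comm]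
        calc ENNReal.ofReal ((4 * π * ‖x - y‖)⁻¹) *
              ∫⁻ s in Set.Ico (t - ‖x - y‖) t, (‖F s y‖₊ : ℝ≥0∞) ∂volume
            ≤ ENNReal.ofReal ((4 * π * ‖x - y‖)⁻¹) *
              (ENNReal.ofReal ‖x - y‖ * eLpNorm (fun t => F t y) ⊤ volume) :=
          mul_le_mul_right h1 _
        _ = (ENNReal.ofReal ((4 * π * ‖x - y‖)⁻¹) * ENNReal.ofReal ‖x - y‖) *
              eLpNorm (fun t => F t y) ⊤ volume := (mul_assoc _ _ _).symm
        _ ≤ (ENNReal.ofReal (4 * π))⁻¹ * eLpNorm (fun t => F t y) ⊤ volume :=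
          mul_le_mul_left (hCr y) _
      refine (lintegral_mono hineq).trans (le_of_eq ?_)
      exact lintegral_const_mul' _ _ hCtop
    exact essSup_le_of_ae_le _ (Filter.Eventually.of_forall hbd)
  -- p finite
  have hP1 : (1:ℝ) ≤ p.toReal := by
    have h := ENNReal.toReal_mono hptop hp
    simpa using h
  have hP0 : (0:ℝ) < p.toReal := lt_of_lt_of_le one_pos hP1
  set P := p.toReal with hPdef
  have hG_meas : Measurable (Function.uncurry (cdK F x)) := by
    show Measurable fun w : (R3 × ℝ) × ℝ =>
      (if w.1.2 ∈ Set.Ioc 0 ‖x - w.1.1‖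
        then ENNReal.ofReal ((4 * π * ‖x - w.1.1‖)⁻¹) else 0) *
        (‖F (w.2 - w.1.2) w.1.1‖₊ : ℝ≥0∞)
    apply Measurable.mul
    · refine Measurable.ite ?_ (hC.comp (measurable_fst.fst)) measurable_const
      have heq : {w : (R3 × ℝ) × ℝ | w.1.2 ∈ Set.Ioc 0 ‖x - w.1.1‖}
          = {w : (R3 × ℝ) × ℝ | 0 < w.1.2} ∩ {w : (R3 × ℝ) × ℝ | w.1.2 ≤ ‖x - w.1.1‖} := rfl
      rw [heq]
      exact (measurableSet_lt measurable_const measurable_fst.snd).inter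
        (measurableSet_le measurable_fst.snd (hr.comp measurable_fst.fst))
    · exact (hF.comp ((measurable_snd.sub measurable_fst.snd).prodMk
        measurable_fst.fst)).enorm
  have hA2 : ∀ t : ℝ, (∫⁻ y : R3, ENNReal.ofReal ((4 * π * ‖x - y‖)⁻¹) *
      ∫⁻ s in Set.Ico (t - ‖x - y‖) t, (‖F s y‖₊ : ℝ≥0∞) ∂volume ∂volume)
      = ∫⁻ z : R3 × ℝ, cdK F x z t ∂volume := by
    intro t
    have hmeas_t : Measurable fun z : R3 × ℝ => cdK F x z t :=
      hG_meas.of_uncurry_right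
    have hpl := lintegral_prod (μ := (volume : Measure R3)) (ν := (volume : Measure ℝ))
      (fun z : R3 × ℝ => cdK F x z t) hmeas_t.aemeasurable
    refine Eq.trans ?_ hpl.symm
    refine lintegral_congr fun y => Eq.symm ?_
    have h1 : (fun u => cdK F x (y, u) t) = (Set.Ioc (0:ℝ) ‖x - y‖).indicator
        (fun u => ENNReal.ofReal ((4 * π * ‖x - y‖)⁻¹) * (‖F (t - u) y‖₊ : ℝ≥0∞)) := by
      funext u
      by_cases h : u ∈ Set.Ioc (0:ℝ) ‖x - y‖
      · rw [Set.indicator_of_mem h]; simp only [cdK, h, if_true]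
      · rw [Set.indicator_of_notMem h]; simp only [cdK, h, if_false, zero_mul]
    rw [h1, lintegral_indicator measurableSet_Ioc,
      lintegral_const_mul' _ _ ENNReal.ofReal_ne_top,
      setLIntegral_Ico_sub (fun s => (‖F s y‖₊ : ℝ≥0∞)) t ‖x - y‖]
  have hNdef : ∀ y : R3, eLpNorm (fun t => F t y) p volume
      = (∫⁻ t, (‖F t y‖₊ : ℝ≥0∞) ^ P ∂volume) ^ (1/P) := fun y =>
    eLpNorm_eq_lintegral_rpow_enorm_toReal hp0 hptop
  have hN_meas : Measurable fun y : R3 => eLpNorm (fun t => F t y) p volume := by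
    have h1 : Measurable (Function.uncurry fun (y : R3) (t : ℝ) => (‖F t y‖₊ : ℝ≥0∞) ^ P) :=
      ENNReal.continuous_rpow_const.measurable.comp
        ((hF.comp (measurable_snd.prodMk measurable_fst)).enorm)
    have h2 : Measurable fun y : R3 => ∫⁻ t, (‖F t y‖₊ : ℝ≥0∞) ^ P ∂volume :=
      Measurable.lintegral_prod_right h1
    have h3 : Measurable fun y : R3 => (∫⁻ t, (‖F t y‖₊ : ℝ≥0∞) ^ P ∂volume) ^ (1/P) :=
      (ENNReal.continuous_rpow_const (y := 1/P)).measurable.comp h2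
    rw [show (fun y : R3 => eLpNorm (fun t => F t y) p volume)
      = fun y : R3 => (∫⁻ t, (‖F t y‖₊ : ℝ≥0∞) ^ P ∂volume) ^ (1/P) from funext hNdef]
    exact h3
  rw [eLpNorm_eq_lintegral_rpow_enorm_toReal hp0 hptop]
  have step1 : (∫⁻ t, (‖cosDuhamel F t x‖₊ : ℝ≥0∞) ^ P ∂volume) ^ (1/P)
      ≤ (∫⁻ t, (∫⁻ z : R3 × ℝ, cdK F x z t ∂volume) ^ P ∂volume) ^ (1/P) := by
    refine ENNReal.rpow_le_rpow (lintegral_mono fun t => ENNReal.rpow_le_rpow ?_ hP0.le)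
      (by positivity)
    rw [← hA2 t]; exact hA t
  have step2 := minkowski_lintegral (volume : Measure ℝ) (volume : Measure (R3 × ℝ))
    hP1 hG_meas
  have step3 : ∫⁻ z : R3 × ℝ, (∫⁻ t, cdK F x z t ^ P ∂volume) ^ (1/P) ∂volume
      ≤ (ENNReal.ofReal (4 * π))⁻¹ * ∫⁻ y : R3, eLpNorm (fun t => F t y) p volume := by
    have hzpt : ∀ z : R3 × ℝ, (∫⁻ t, cdK F x z t ^ P ∂volume) ^ (1/P)
        = (if z.2 ∈ Set.Ioc 0 ‖x - z.1‖
            then ENNReal.ofReal ((4 * π * ‖x - z.1‖)⁻¹) else 0) *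
          eLpNorm (fun t => F t z.1) p volume := by
      intro z
      set a := (if z.2 ∈ Set.Ioc 0 ‖x - z.1‖
        then ENNReal.ofReal ((4 * π * ‖x - z.1‖)⁻¹) else 0) with hadef
      have ha_ne_top : a ≠ ⊤ := by
        rw [hadef]; split
        · exact ENNReal.ofReal_ne_top
        · exact ENNReal.zero_ne_top
      have h2 : ∀ t, cdK F x z t ^ P = a ^ P * (‖F (t - z.2) z.1‖₊ : ℝ≥0∞) ^ P := by
        intro t
        rw [show cdK F x z t = a * (‖F (t - z.2) z.1‖₊ : ℝ≥0∞) from rfl,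
          ENNReal.mul_rpow_of_nonneg _ _ hP0.le]
      rw [lintegral_congr h2,
        lintegral_const_mul' _ _ (ENNReal.rpow_ne_top_of_nonneg hP0.le ha_ne_top),
        lintegral_sub_eq' (fun s => (‖F s z.1‖₊ : ℝ≥0∞) ^ P) z.2,
        ENNReal.mul_rpow_of_nonneg _ _ (by positivity : (0:ℝ) ≤ 1/P),
        ← ENNReal.rpow_mul, mul_one_div, div_self hP0.ne', ENNReal.rpow_one,
        hNdef z.1]
    have hind_meas : Measurable fun z : R3 × ℝ =>
        (if z.2 ∈ Set.Ioc 0 ‖x - z.1‖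
          then ENNReal.ofReal ((4 * π * ‖x - z.1‖)⁻¹) else 0) *
          eLpNorm (fun t => F t z.1) p volume := by
      refine Measurable.mul ?_ (hN_meas.comp measurable_fst)
      refine Measurable.ite ?_ (hC.comp measurable_fst) measurable_const
      have heq : {z : R3 × ℝ | z.2 ∈ Set.Ioc 0 ‖x - z.1‖}
          = {z : R3 × ℝ | 0 < z.2} ∩ {z : R3 × ℝ | z.2 ≤ ‖x - z.1‖} := rfl
      rw [heq]
      exact (measurableSet_lt measurable_const measurable_snd).inter
        (measurableSet_le measurable_snd (hr.comp measurable_fst))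
    have hpl2 := lintegral_prod (μ := (volume : Measure R3)) (ν := (volume : Measure ℝ))
      (fun z : R3 × ℝ =>
      (if z.2 ∈ Set.Ioc 0 ‖x - z.1‖
        then ENNReal.ofReal ((4 * π * ‖x - z.1‖)⁻¹) else 0) *
        eLpNorm (fun t => F t z.1) p volume) hind_meas.aemeasurable
    rw [lintegral_congr hzpt]
    refine le_trans (le_of_eq hpl2) ?_
    · have hyb : ∀ y : R3, (∫⁻ u : ℝ, (if u ∈ Set.Ioc 0 ‖x - y‖
          then ENNReal.ofReal ((4 * π * ‖x - y‖)⁻¹) else 0) *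
            eLpNorm (fun t => F t y) p volume ∂volume)
          ≤ (ENNReal.ofReal (4 * π))⁻¹ * eLpNorm (fun t => F t y) p volume := by
        intro y
        have h1 : (fun u : ℝ => (if u ∈ Set.Ioc 0 ‖x - y‖
            then ENNReal.ofReal ((4 * π * ‖x - y‖)⁻¹) else 0) *
              eLpNorm (fun t => F t y) p volume)
            = (Set.Ioc (0:ℝ) ‖x - y‖).indicator
              (fun _ => ENNReal.ofReal ((4 * π * ‖x - y‖)⁻¹) *
                eLpNorm (fun t => F t y) p volume) := by
          funext u
          by_cases h : u ∈ Set.Ioc (0:ℝ) ‖x - y‖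
          · rw [Set.indicator_of_mem h, if_pos h]
          · rw [Set.indicator_of_notMem h, if_neg h, zero_mul]
        rw [h1, lintegral_indicator_const measurableSet_Ioc, Real.volume_Ioc, sub_zero]
        calc ENNReal.ofReal ((4 * π * ‖x - y‖)⁻¹) * eLpNorm (fun t => F t y) p volume *
              ENNReal.ofReal ‖x - y‖
            = (ENNReal.ofReal ((4 * π * ‖x - y‖)⁻¹) * ENNReal.ofReal ‖x - y‖) *
              eLpNorm (fun t => F t y) p volume := by ring
        _ ≤ (ENNReal.ofReal (4 * π))⁻¹ * eLpNorm (fun t => F t y) p volume :=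
          mul_le_mul_left (hCr y) _
      refine (lintegral_mono hyb).trans (le_of_eq ?_)
      exact lintegral_const_mul' _ _ hCtop
  exact step1.trans (step2.trans step3)
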